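/- Let m ≥ 4 be an integer and let h : ℝ → ℝ be continuous, nonnegative, and 2π/m-periodic. Define c_h = 12·(∂_θθ + 4)^{-1} h, where (∂_θθ+4)^{-1} is the inverse of the operator G ↦ G'' + 4G on 2π/m-periodic functions, given by convolution against the kernel K^m(θ) = C_m |sin(mθ/2)| + C̃_m with C_m = 3π/(2(m²−4)) and C̃_m = 1/4 − 3/(m²−4). Then c_h(θ) ≥ C̃_m · (average of h over [−π,π]) · 12 ≥ 0 for all θ, and if c_h(θ₀) = 0 for some θ₀ then h ≡ 0. -/

import Mathlib

open Real Set intervalIntegral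

set_option maxHeartbeats 1000000 in
theorem stmt7 (m : ℕ) (hm : 4 ≤ m) (h : ℝ → ℝ)
    (hcont : Continuous h) (hnn : ∀ θ, 0 ≤ h θ)
    (hper : ∀ θ, h (θ + 2 * π / m) = h θ)
    (ch : ℝ → ℝ)
    (hch : ∀ θ, ch θ = 12 * ((m : ℝ) / (2 * π)) *
        ∫ ω in (-(π / m))..(π / m),
          ((3 * π / (2 * ((m : ℝ) ^ 2 - 4))) * |Real.sin (((m : ℝ) / 2) * (θ - ω))| +
            (1 / 4 - 3 / ((m : ℝ) ^ 2 - 4))) * h ω) :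
    (∀ θ, 12 * (1 / 4 - 3 / ((m : ℝ) ^ 2 - 4)) * ((1 / (2 * π)) * ∫ ω in (-π)..π, h ω) ≤ ch θ ∧
        0 ≤ 12 * (1 / 4 - 3 / ((m : ℝ) ^ 2 - 4)) * ((1 / (2 * π)) * ∫ ω in (-π)..π, h ω)) ∧
    (∀ θ₀, ch θ₀ = 0 → ∀ θ, h θ = 0) := by
  have hpi := Real.pi_pos
  set M : ℝ := (m : ℝ) with hMdef
  have hM4 : (4 : ℝ) ≤ M := by
    rw [hMdef]; exact_mod_cast hm
  have hMpos : 0 < M := by linarith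
  have hden : (0 : ℝ) < M ^ 2 - 4 := by nlinarith
  have hden12 : (12 : ℝ) ≤ M ^ 2 - 4 := by nlinarith
  set C : ℝ := 3 * π / (2 * (M ^ 2 - 4)) with hCdef
  set Ct : ℝ := 1 / 4 - 3 / (M ^ 2 - 4) with hCtdef
  have hC : 0 < C := by positivity
  have hCt : 0 ≤ Ct := by
    rw [hCtdef, sub_nonneg, div_le_div_iff₀ hden (by norm_num)]
    linarith
  have hP : Function.Periodic h (2 * π / M) := hper
  have hT : (0 : ℝ) < 2 * π / M := by positivity
  have hint : ∀ t₁ t₂ : ℝ, IntervalIntegrable h MeasureTheory.volume t₁ t₂ :=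
    fun t₁ t₂ => hcont.intervalIntegrable t₁ t₂
  -- continuity of the integrand
  have hgcont : ∀ θ : ℝ, Continuous (fun ω =>
      (C * |Real.sin ((M / 2) * (θ - ω))| + Ct) * h ω) := by
    intro θ
    exact ((continuous_const.mul
      ((Real.continuous_sin.comp
        (continuous_const.mul (continuous_const.sub continuous_id))).abs)).add
      continuous_const).mul hcont
  -- relation between the two integrals of h
  have hsplit : (∫ ω in (-π)..π, h ω) = M * ∫ ω in (-(π / M))..(π / M), h ω := by
    have e1 : -π + ((m : ℤ) • (2 * π / M)) = π := by
      rw [zsmul_eq_mul, Int.cast_natCast, ← hMdef, mul_div_assoc', mul_comm M, mul_div_assoc, div_self hMpos.ne']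
      ring
    have e2 := hP.intervalIntegral_add_zsmul_eq (m : ℤ) (-π) hint
    rw [e1] at e2
    have e3 := hP.intervalIntegral_add_eq (-π) (-(π / M))
    have e4 : -(π / M) + 2 * π / M = π / M := by field_simp; ring
    rw [e4] at e3
    rw [e2, e3, zsmul_eq_mul]
    push_cast
    ring
  have hbnd : ∀ θ : ℝ, Ct * (∫ ω in (-(π / M))..(π / M), h ω) ≤
      ∫ ω in (-(π / M))..(π / M),
        (C * |Real.sin ((M / 2) * (θ - ω))| + Ct) * h ω := by
    intro θ
    rw [← intervalIntegral.integral_const_mul]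
    have hIab : -(π / M) ≤ π / M := by
      have := div_pos hpi hMpos; linarith
    apply intervalIntegral.integral_mono_on hIab
      ((continuous_const.mul hcont).intervalIntegrable _ _)
      ((hgcont θ).intervalIntegrable _ _)
    intro x _
    have h1 : 0 ≤ C * |Real.sin ((M / 2) * (θ - x))| :=
      mul_nonneg hC.le (abs_nonneg _)
    show Ct * h x ≤ (C * |Real.sin ((M / 2) * (θ - x))| + Ct) * h x
    nlinarith [hnn x]
  have hSnn : 0 ≤ ∫ ω in (-π)..π, h ω :=
    intervalIntegral.integral_nonneg (by linarith) (fun u _ => hnn u)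
  constructor
  · intro θ
    constructor
    · rw [hch θ, hsplit]
      have hA : (0 : ℝ) ≤ 12 * (M / (2 * π)) := by positivity
      calc 12 * Ct * (1 / (2 * π) * (M * ∫ ω in (-(π / M))..(π / M), h ω))
          = 12 * (M / (2 * π)) * (Ct * ∫ ω in (-(π / M))..(π / M), h ω) := by ring
        _ ≤ 12 * (M / (2 * π)) * ∫ ω in (-(π / M))..(π / M),
              (C * |Real.sin ((M / 2) * (θ - ω))| + Ct) * h ω :=
            mul_le_mul_of_nonneg_left (hbnd θ) hA
    · have : (0:ℝ) ≤ 1 / (2 * π) := by positivity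
      exact mul_nonneg (mul_nonneg (by norm_num) hCt) (mul_nonneg this hSnn)
  · intro θ₀ hzero θ
    by_contra hne
    have hθpos : 0 < h θ := lt_of_le_of_ne (hnn θ) (Ne.symm hne)
    -- reduce θ into the fundamental interval
    set T : ℝ := 2 * π / M with hTdef
    set n : ℤ := ⌊(θ + π / M) / T⌋ with hndef
    set ω₁ : ℝ := θ - n * T with hω₁def
    have hfl : (n : ℝ) ≤ (θ + π / M) / T := Int.floor_le _
    have hfl2 : (θ + π / M) / T < n + 1 := Int.lt_floor_add_one _
    have hnT : (n : ℝ) * T ≤ θ + π / M := by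
      rw [← le_div_iff₀ hT] ; exact hfl
    have hnT2 : θ + π / M < ((n : ℝ) + 1) * T := by
      rw [← div_lt_iff₀ hT] ; exact hfl2
    have hω₁lb : -(π / M) ≤ ω₁ := by
      rw [hω₁def]; linarith
    have hω₁ub : ω₁ < π / M := by
      have : T = 2 * (π / M) := by rw [hTdef]; ring
      rw [hω₁def]; nlinarith [hnT2]
    have hω₁pos : 0 < h ω₁ := by
      have := hP.sub_int_mul_eq (x := θ) n
      rw [hω₁def, this]
      exact hθpos
    -- find a point where the kernel is positive too
    have hkey : ∃ c ∈ Icc (-(π / M)) (π / M),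
        0 < (C * |Real.sin ((M / 2) * (θ₀ - c))| + Ct) * h c := by
      by_cases hs : Real.sin ((M / 2) * (θ₀ - ω₁)) = 0
      · -- shift slightly
        have hopen : IsOpen {x : ℝ | 0 < h x} := isOpen_lt continuous_const hcont
        obtain ⟨δ, hδpos, hball⟩ := Metric.isOpen_iff.1 hopen ω₁ hω₁pos
        set ε : ℝ := min δ (π / M - ω₁) / 2 with hεdef
        have hεpos : 0 < ε := by
          have : 0 < π / M - ω₁ := by linarith
          have := lt_min hδpos this
          rw [hεdef]; linarith [lt_min hδpos ‹0 < π / M - ω₁›]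
        have hεδ : ε < δ := by
          have := min_le_left δ (π / M - ω₁)
          rw [hεdef]; linarith
        have hεub : ε ≤ (π / M - ω₁) / 2 := by
          have := min_le_right δ (π / M - ω₁)
          rw [hεdef]; linarith
        refine ⟨ω₁ + ε, ⟨by linarith, by linarith⟩, ?_⟩
        have hhc : 0 < h (ω₁ + ε) := by
          apply hball
          rw [Metric.mem_ball, Real.dist_eq]
          rw [abs_of_pos (by linarith : (0:ℝ) < ω₁ + ε - ω₁)]
          linarith
        have hsc : Real.sin ((M / 2) * (θ₀ - (ω₁ + ε))) ≠ 0 := by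
          intro hzero2
          obtain ⟨k, hk⟩ := Real.sin_eq_zero_iff.1 hs
          obtain ⟨k', hk'⟩ := Real.sin_eq_zero_iff.1 hzero2
          have hd : ((k - k' : ℤ) : ℝ) * π = (M / 2) * ε := by
            push_cast
            linear_combination hk - hk'
          have hεsmall : (M / 2) * ε < π := by
            have hεle : ε ≤ π / M := by linarith
            have e5 : (M / 2) * (π / M) = π / 2 := by field_simp
            have := mul_le_mul_of_nonneg_left hεle (by positivity : (0:ℝ) ≤ M / 2)
            linarith
          have hεbig : 0 < (M / 2) * ε := by positivity
          have h0 : (0 : ℝ) < ((k - k' : ℤ) : ℝ) := by nlinarith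
          have h1 : ((k - k' : ℤ) : ℝ) < 1 := by nlinarith
          have h0' : (0 : ℤ) < k - k' := by exact_mod_cast h0
          have h1' : (k - k' : ℤ) < 1 := by exact_mod_cast h1
          omega
        have : 0 < C * |Real.sin ((M / 2) * (θ₀ - (ω₁ + ε)))| + Ct :=
          add_pos_of_pos_of_nonneg (mul_pos hC (abs_pos.2 hsc)) hCt
        exact mul_pos this hhc
      · refine ⟨ω₁, ⟨hω₁lb, hω₁ub.le⟩, ?_⟩
        have : 0 < C * |Real.sin ((M / 2) * (θ₀ - ω₁))| + Ct :=
          add_pos_of_pos_of_nonneg (mul_pos hC (abs_pos.2 hs)) hCt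
        exact mul_pos this hω₁pos
    have hIpos : 0 < ∫ ω in (-(π / M))..(π / M),
        (C * |Real.sin ((M / 2) * (θ₀ - ω))| + Ct) * h ω := by
      have hIab : -(π / M) < π / M := by
        have := div_pos hpi hMpos; linarith
      apply intervalIntegral.integral_pos hIab ((hgcont θ₀).continuousOn)
      · intro x _
        exact mul_nonneg (add_nonneg (mul_nonneg hC.le (abs_nonneg _)) hCt) (hnn x)
      · exact hkey
    have : 0 < ch θ₀ := by
      rw [hch θ₀]
      exact mul_pos (by positivity) hIpos
    linarith [hzero ▸ this]
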